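/- Let γ_X and γ_Y be two DMSs, and suppose R is an ε-tripod between γ_X and γ_Y. Then for any closed interval I = [u, u'] ⊆ ℝ, writing I^ε = [u−ε, u'+ε], one has ⋁_{I^ε} d_X ≤_R (⋁_I d_Y) + 2ε and ⋁_{I^ε} d_Y ≤_R (⋁_I d_X) + 2ε. -/

import Mathlib

namespace Stmt3

/-- `(⋁_{[a,b]} d)(x,x')`. -/
noncomputable def vee {X : Type} (d : ℝ → X → X → ℝ) (a b : ℝ) (x x' : X) : ℝ :=
  sInf ((fun s => d s x x') '' Set.Icc a b)

lemma vee_le {X : Type} (d : ℝ → X → X → ℝ) (hnn : ∀ t x x', 0 ≤ d t x x')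
    {a b s : ℝ} (hs : s ∈ Set.Icc a b) (x x' : X) :
    vee d a b x x' ≤ d s x x' := by
  apply csInf_le
  · exact ⟨0, fun r ⟨t, _, ht⟩ => ht ▸ hnn t x x'⟩
  · exact ⟨s, hs, rfl⟩

lemma vee_attained {X : Type} (d : ℝ → X → X → ℝ) (hnn : ∀ t x x', 0 ≤ d t x x')
    (hcont : ∀ x x', Continuous fun t => d t x x')
    {a b : ℝ} (hab : a ≤ b) (x x' : X) :
    ∃ t₀ ∈ Set.Icc a b, vee d a b x x' = d t₀ x x' := by
  obtain ⟨t₀, ht₀, hmin⟩ := isCompact_Icc.exists_isMinOn (Set.nonempty_Icc.2 hab)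
    ((hcont x x').continuousOn (s := Set.Icc a b))
  refine ⟨t₀, ht₀, le_antisymm (vee_le d hnn ht₀ x x') ?_⟩
  apply le_csInf (((Set.nonempty_Icc.2 hab)).image _)
  rintro r ⟨t, ht, rfl⟩
  exact hmin ht

lemma vee_mono {X : Type} (d : ℝ → X → X → ℝ) (hnn : ∀ t x x', 0 ≤ d t x x')
    {a b a' b' : ℝ} (ha : a ≤ a') (hb : b' ≤ b) (hab' : a' ≤ b') (x x' : X) :
    vee d a b x x' ≤ vee d a' b' x x' := by
  apply csInf_le_csInf
  · exact ⟨0, fun r ⟨t, _, ht⟩ => ht ▸ hnn t x x'⟩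
  · exact ⟨d a' x x', a', Set.mem_Icc.2 ⟨le_refl a', hab'⟩, rfl⟩
  · exact Set.image_mono (Set.Icc_subset_Icc ha hb)

/-- if `R` is an `ε`-tripod between the DMSs `γ_X` and `γ_Y`, then for any
closed interval `I = [u,u']`, `⋁_{I^ε} d_X ≤_R (⋁_I d_Y) + 2ε` and symmetrically. -/
theorem eps_tripod_interval_inequality
    {X Y Z : Type} [Fintype X] [Nonempty X] [Fintype Y] [Nonempty Y]
    (dX : ℝ → X → X → ℝ) (dY : ℝ → Y → Y → ℝ)
    (hXnn : ∀ t x x', 0 ≤ dX t x x') (hXrefl : ∀ t x, dX t x x = 0)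
    (hXsymm : ∀ t x x', dX t x x' = dX t x' x)
    (hXtri : ∀ t x x' x'', dX t x x'' ≤ dX t x x' + dX t x' x'')
    (hXcont : ∀ x x', Continuous fun t => dX t x x')
    (hYnn : ∀ t y y', 0 ≤ dY t y y') (hYrefl : ∀ t y, dY t y y = 0)
    (hYsymm : ∀ t y y', dY t y y' = dY t y' y)
    (hYtri : ∀ t y y' y'', dY t y y'' ≤ dY t y y' + dY t y' y'')
    (hYcont : ∀ y y', Continuous fun t => dY t y y')
    (pX : Z → X) (pY : Z → Y)
    (hpX : Function.Surjective pX) (hpY : Function.Surjective pY)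
    (ε : ℝ) (hε : 0 ≤ ε)
    (htripod : ∀ t : ℝ, ∀ z z' : Z,
      vee dX (t - ε) (t + ε) (pX z) (pX z') ≤ dY t (pY z) (pY z') + 2 * ε ∧
      vee dY (t - ε) (t + ε) (pY z) (pY z') ≤ dX t (pX z) (pX z') + 2 * ε) :
    ∀ u u' : ℝ, u ≤ u' → ∀ z z' : Z,
      vee dX (u - ε) (u' + ε) (pX z) (pX z') ≤ vee dY u u' (pY z) (pY z') + 2 * ε ∧
      vee dY (u - ε) (u' + ε) (pY z) (pY z') ≤ vee dX u u' (pX z) (pX z') + 2 * ε := by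
  intro u u' huu z z'
  constructor
  · obtain ⟨t₀, ht₀, heq⟩ := vee_attained dY hYnn hYcont huu (pY z) (pY z')
    calc vee dX (u - ε) (u' + ε) (pX z) (pX z')
        ≤ vee dX (t₀ - ε) (t₀ + ε) (pX z) (pX z') :=
          vee_mono dX hXnn (by linarith [ht₀.1]) (by linarith [ht₀.2]) (by linarith)
            (pX z) (pX z')
      _ ≤ dY t₀ (pY z) (pY z') + 2 * ε := (htripod t₀ z z').1
      _ = vee dY u u' (pY z) (pY z') + 2 * ε := by rw [heq]
  · obtain ⟨t₀, ht₀, heq⟩ := vee_attained dX hXnn hXcont huu (pX z) (pX z')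
    calc vee dY (u - ε) (u' + ε) (pY z) (pY z')
        ≤ vee dY (t₀ - ε) (t₀ + ε) (pY z) (pY z') :=
          vee_mono dY hYnn (by linarith [ht₀.1]) (by linarith [ht₀.2]) (by linarith)
            (pY z) (pY z')
      _ ≤ dX t₀ (pX z) (pX z') + 2 * ε := (htripod t₀ z z').2
      _ = vee dX u u' (pX z) (pX z') + 2 * ε := by rw [heq]

end Stmt3
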